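/- (Hörmander, semidefinite case with symplectic kernel) Let f be a positive-semidefinite quadratic form on a 2n-dimensional symplectic vector space (V, ω) with associated map F, and suppose Ker(F) is a symplectic subspace of V. Then there exist a symplectic basis {x_1,…,x_n,y_1,…,y_n} of V, an integer 0 ≤ k ≤ n, and positive reals μ_1,…,μ_k such that f(Σ_j (s_j x_j + t_j y_j)) = Σ_{j=1}^k μ_j (s_j² + t_j²). -/

import Mathlib

set_option maxHeartbeats 1000000

open Module

lemma exists_eigen {U : Type*} [AddCommGroup U] [Module ℝ U] [FiniteDimensional ℝ U]
    [Nontrivial U]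
    (B : LinearMap.BilinForm ℝ U) (hsymm : ∀ x y, B x y = B y x)
    (hdef : ∀ x : U, x ≠ 0 → 0 < B x x)
    (T : U →ₗ[ℝ] U) (hT : ∀ x y, B (T x) y = B x (T y)) :
    ∃ (c : ℝ) (v : U), v ≠ 0 ∧ T v = c • v := by
  letI cd : InnerProductSpace.Core ℝ U :=
    { inner := fun x y => B x y
      conj_inner_symm := fun x y => by simpa using hsymm y x
      re_inner_nonneg := fun x => by
        rcases eq_or_ne x 0 with rfl | hx
        · simp
        · exact le_of_lt (by simpa using hdef x hx)
      add_left := fun x y z => by simp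
      smul_left := fun x y r => by simp
      definite := fun x hx => by
        by_contra h
        exact absurd hx (ne_of_gt (by simpa using hdef x h)) }
  letI : NormedAddCommGroup U := cd.toNormedAddCommGroup
  letI : InnerProductSpace ℝ U := InnerProductSpace.ofCore cd.toCore
  haveI : FiniteDimensional ℝ U := ‹_›
  have hsym : T.IsSymmetric := fun x y => hT x y
  obtain ⟨v, hv, hv0⟩ :=
    (hsym.hasEigenvalue_iSup_of_finiteDimensional).exists_hasEigenvector
  exact ⟨_, v, hv0, (Module.End.mem_eigenspace_iff).1 hv⟩

lemma finrank_step {V : Type*} [AddCommGroup V] [Module ℝ V] [FiniteDimensional ℝ V]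
    (ω : LinearMap.BilinForm ℝ V) (hanti : ∀ v w : V, ω v w = - ω w v)
    (U : Submodule ℝ V) (x₀ y₀ : V) (hx₀ : x₀ ∈ U) (hy₀ : y₀ ∈ U)
    (hω1 : ω x₀ y₀ = 1) :
    2 + finrank ℝ (U ⊓ LinearMap.ker (ω x₀) ⊓ LinearMap.ker (ω y₀) : Submodule ℝ V)
      = finrank ℝ U := by
  have hself : ∀ v : V, ω v v = 0 := fun v => by have := hanti v v; linarith
  set ψ : U →ₗ[ℝ] ℝ × ℝ :=
    LinearMap.prod ((ω x₀).comp U.subtype) ((ω y₀).comp U.subtype) with hψ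
  have hrange : LinearMap.range ψ = ⊤ := by
    rw [Submodule.eq_top_iff']
    intro p
    have h1 : (1, 0) ∈ LinearMap.range ψ := ⟨⟨y₀, hy₀⟩, by
      simp [hψ, hω1, hself]⟩
    have h2 : ((0 : ℝ), -1) ∈ LinearMap.range ψ := ⟨⟨x₀, hx₀⟩, by
      have : ω y₀ x₀ = -1 := by rw [hanti, hω1]
      simp [hψ, this, hself]⟩
    have := Submodule.add_mem _ (Submodule.smul_mem _ p.1 h1)
      (Submodule.smul_mem _ (-p.2) h2)
    simpa [Prod.ext_iff] using this
  have hker : Submodule.map U.subtype (LinearMap.ker ψ)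
      = U ⊓ LinearMap.ker (ω x₀) ⊓ LinearMap.ker (ω y₀) := by
    ext z
    simp only [Submodule.mem_map, LinearMap.mem_ker, Submodule.mem_inf]
    constructor
    · rintro ⟨⟨u, hu⟩, hk, rfl⟩
      have h1 : ω x₀ u = 0 := congrArg Prod.fst hk
      have h2 : ω y₀ u = 0 := congrArg Prod.snd hk
      exact ⟨⟨hu, h1⟩, h2⟩
    · rintro ⟨⟨hu, h1⟩, h2⟩
      exact ⟨⟨z, hu⟩, by
        simp only [hψ]; exact Prod.ext (by simpa using h1) (by simpa using h2), rfl⟩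
  have hrn := LinearMap.finrank_range_add_finrank_ker ψ
  rw [hrange] at hrn
  have h2 : finrank ℝ (⊤ : Submodule ℝ (ℝ × ℝ)) = 2 := by
    simp [finrank_top]
  rw [h2] at hrn
  rw [← hker, Submodule.finrank_map_subtype_eq]
  exact hrn

lemma lemS {V : Type*} [AddCommGroup V] [Module ℝ V] [FiniteDimensional ℝ V]
    (ω : LinearMap.BilinForm ℝ V) (hanti : ∀ v w : V, ω v w = - ω w v) :
    ∀ (N : ℕ) (U : Submodule ℝ V), Module.finrank ℝ U = N →
    (∀ v ∈ U, (∀ w ∈ U, ω v w = 0) → v = 0) →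
    ∃ (m : ℕ) (x y : Fin m → V), N = 2 * m ∧
      (∀ i, x i ∈ U) ∧ (∀ i, y i ∈ U) ∧
      (∀ i j, ω (x i) (y j) = if i = j then 1 else 0) ∧
      (∀ i j, ω (x i) (x j) = 0) ∧ (∀ i j, ω (y i) (y j) = 0) := by
  have hself : ∀ v : V, ω v v = 0 := fun v => by have := hanti v v; linarith
  intro N
  induction N using Nat.strong_induction_on with
  | _ N ih =>
    intro U hrank hnd
    rcases Nat.eq_zero_or_pos N with hN | hN
    · exact ⟨0, Fin.elim0, Fin.elim0, by omega, fun i => i.elim0, fun i => i.elim0,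
        fun i => i.elim0, fun i => i.elim0, fun i => i.elim0⟩
    have hposr : 0 < finrank ℝ U := by omega
    have hnt : Nontrivial U := Module.finrank_pos_iff.mp hposr
    obtain ⟨⟨x₀, hx₀U⟩, hx₀ne⟩ := exists_ne (0 : U)
    have hx₀ne' : x₀ ≠ 0 := by simpa [Subtype.ext_iff] using hx₀ne
    -- find y₀' with ω x₀ y₀' ≠ 0
    have : ∃ y ∈ U, ω x₀ y ≠ 0 := by
      by_contra h
      push_neg at h
      exact hx₀ne' (hnd x₀ hx₀U h)
    obtain ⟨y₀', hy₀'U, hy₀'ne⟩ := this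
    set y₀ : V := (ω x₀ y₀')⁻¹ • y₀' with hy₀def
    have hy₀U : y₀ ∈ U := Submodule.smul_mem _ _ hy₀'U
    have hω1 : ω x₀ y₀ = 1 := by
      simp [hy₀def, inv_mul_cancel₀ hy₀'ne]
    set U' : Submodule ℝ V := U ⊓ LinearMap.ker (ω x₀) ⊓ LinearMap.ker (ω y₀) with hU'
    have hfr : 2 + finrank ℝ U' = N := by
      rw [hU']; rw [finrank_step ω hanti U x₀ y₀ hx₀U hy₀U hω1]; exact hrank
    have hU'le : ∀ z ∈ U', z ∈ U ∧ ω x₀ z = 0 ∧ ω y₀ z = 0 := by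
      intro z hz
      rw [hU'] at hz
      obtain ⟨⟨h1, h2⟩, h3⟩ := hz
      exact ⟨h1, h2, h3⟩
    -- nondegeneracy on U'
    have hnd' : ∀ v ∈ U', (∀ w ∈ U', ω v w = 0) → v = 0 := by
      intro v hv hvw
      obtain ⟨hvU, hvx, hvy⟩ := hU'le v hv
      apply hnd v hvU
      intro u hu
      set u' : V := u + (ω y₀ u) • x₀ - (ω x₀ u) • y₀ with hu'def
      have hu'U' : u' ∈ U' := by
        have h1 : u' ∈ U := Submodule.sub_mem _
          (Submodule.add_mem _ hu (Submodule.smul_mem _ _ hx₀U))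
          (Submodule.smul_mem _ _ hy₀U)
        have h2 : ω x₀ u' = 0 := by
          simp only [hu'def, map_add, map_sub, map_smul, smul_eq_mul, hself, hω1]; ring
        have h3 : ω y₀ u' = 0 := by
          have hyx : ω y₀ x₀ = -1 := by rw [hanti, hω1]
          simp only [hu'def, map_add, map_sub, map_smul, smul_eq_mul, hself, hyx]; ring
        rw [hU']
        exact Submodule.mem_inf.mpr ⟨Submodule.mem_inf.mpr ⟨h1, LinearMap.mem_ker.mpr h2⟩,
          LinearMap.mem_ker.mpr h3⟩
      have hvx' : ω v x₀ = 0 := by rw [hanti]; rw [hvx]; ring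
      have hvy' : ω v y₀ = 0 := by rw [hanti]; rw [hvy]; ring
      have := hvw u' hu'U'
      rw [hu'def] at this
      simp only [map_add, map_sub, map_smul, smul_eq_mul, hvx', hvy'] at this
      linarith [this]
    obtain ⟨m', x', y', hm', hx'U, hy'U, hxy', hxx', hyy'⟩ :=
      ih (finrank ℝ U') (by omega) U' rfl hnd'
    refine ⟨m' + 1, Fin.cons x₀ x', Fin.cons y₀ y', by omega, ?_, ?_, ?_, ?_, ?_⟩
    · intro i
      refine Fin.cases ?_ ?_ i
      · exact hx₀U
      · intro j; exact (hU'le _ (hx'U j)).1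
    · intro i
      refine Fin.cases ?_ ?_ i
      · exact hy₀U
      · intro j; exact (hU'le _ (hy'U j)).1
    · intro i j
      refine Fin.cases ?_ ?_ i <;> [skip; intro i'] <;> refine Fin.cases ?_ ?_ j
      · simp [hω1]
      · intro j'
        have := (hU'le _ (hy'U j')).2.1
        simp [this, (Fin.succ_ne_zero j').symm]
      · have h0 : ω (x' i') y₀ = 0 := by
          rw [hanti, (hU'le _ (hx'U i')).2.2]; ring
        simp [h0, Fin.succ_ne_zero i']
      · intro j'
        have := hxy' i' j'
        simp [this, Fin.succ_inj]
    · intro i j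
      refine Fin.cases ?_ ?_ i <;> [skip; intro i'] <;> refine Fin.cases ?_ ?_ j
      · simp [hself]
      · intro j'; simpa using (hU'le _ (hx'U j')).2.1
      · have : ω (x' i') x₀ = 0 := by rw [hanti, (hU'le _ (hx'U i')).2.1]; ring
        simpa using this
      · intro j'; simpa using hxx' i' j'
    · intro i j
      refine Fin.cases ?_ ?_ i <;> [skip; intro i'] <;> refine Fin.cases ?_ ?_ j
      · simp [hself]
      · intro j'; simpa using (hU'le _ (hy'U j')).2.2
      · have : ω (y' i') y₀ = 0 := by rw [hanti, (hU'le _ (hy'U i')).2.2]; ring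
        simpa using this
      · intro j'; simpa using hyy' i' j'

lemma lemW {V : Type*} [AddCommGroup V] [Module ℝ V] [FiniteDimensional ℝ V]
    (ω : LinearMap.BilinForm ℝ V) (hanti : ∀ v w : V, ω v w = - ω w v)
    (A : LinearMap.BilinForm ℝ V) (hA_symm : ∀ v w : V, A v w = A w v)
    (F : V →ₗ[ℝ] V) (hF : ∀ v w : V, A v w = ω v (F w)) :
    ∀ (N : ℕ) (U : Submodule ℝ V), Module.finrank ℝ U = N →
    (∀ v ∈ U, (∀ w ∈ U, ω v w = 0) → v = 0) →
    (∀ v ∈ U, F v ∈ U) →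
    (∀ v ∈ U, v ≠ 0 → 0 < A v v) →
    ∃ (m : ℕ) (x y : Fin m → V) (μ : Fin m → ℝ), N = 2 * m ∧
      (∀ i, x i ∈ U) ∧ (∀ i, y i ∈ U) ∧ (∀ i, 0 < μ i) ∧
      (∀ i j, ω (x i) (y j) = if i = j then 1 else 0) ∧
      (∀ i j, ω (x i) (x j) = 0) ∧ (∀ i j, ω (y i) (y j) = 0) ∧
      (∀ i j, A (x i) (x j) = if i = j then μ i else 0) ∧
      (∀ i j, A (y i) (y j) = if i = j then μ i else 0) ∧
      (∀ i j, A (x i) (y j) = 0) := by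
  have hself : ∀ v : V, ω v v = 0 := fun v => by have := hanti v v; linarith
  have hAskew : ∀ v w : V, A (F v) w = - A v (F w) := by
    intro v w
    rw [hF (F v) w, hanti (F v) (F w), ← hF (F w) v, hA_symm (F w) v]
  intro N
  induction N using Nat.strong_induction_on with
  | _ N ih =>
    intro U hrank hnd hFU hpos
    rcases Nat.eq_zero_or_pos N with hN | hN
    · exact ⟨0, Fin.elim0, Fin.elim0, Fin.elim0, by omega, fun i => i.elim0, fun i => i.elim0,
        fun i => i.elim0, fun i => i.elim0, fun i => i.elim0, fun i => i.elim0,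
        fun i => i.elim0, fun i => i.elim0, fun i => i.elim0⟩
    have hposr : 0 < finrank ℝ U := by omega
    haveI hnt : Nontrivial U := Module.finrank_pos_iff.mp hposr
    set G : U →ₗ[ℝ] U := F.restrict hFU with hG
    set B : LinearMap.BilinForm ℝ U := A.restrict U with hB
    have hBapp : ∀ u w : U, B u w = A u w := fun u w => rfl
    have hBsymm : ∀ u w : U, B u w = B w u := fun u w => hA_symm u w
    have hBdef : ∀ u : U, u ≠ 0 → 0 < B u u := by
      intro u hu
      refine hpos u u.2 fun h => hu (Subtype.ext h)
    set T : U →ₗ[ℝ] U := G.comp G with hT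
    have hTcoe : ∀ u : U, (T u : V) = F (F u) := fun u => rfl
    have hTsym : ∀ u w : U, B (T u) w = B u (T w) := by
      intro u w
      show A (F (F u)) w = A u (F (F w))
      rw [hAskew, hAskew]
      ring
    obtain ⟨c, v, hvne, hTv⟩ := exists_eigen B hBsymm hBdef T hTsym
    have hvV : (v : V) ≠ 0 := fun h => hvne (Subtype.ext h)
    have hvU : (v : V) ∈ U := v.2
    have hFFv : F (F v) = c • (v : V) := by
      have := congrArg Subtype.val hTv
      exact this
    have hAvv : 0 < A v v := hpos _ hvU hvV
    have hFvU : F (v : V) ∈ U := hFU _ hvU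
    have hFv0 : F (v : V) ≠ 0 := by
      intro h
      have : A v v = 0 := by rw [hF, h, map_zero]
      linarith
    have hAFv : 0 < A (F (v : V)) (F v) := hpos _ hFvU hFv0
    have hcA : A (F (v : V)) (F v) = -(c * A v v) := by
      rw [hAskew, hFFv, map_smul]
      simp [smul_eq_mul]
    have hc : c < 0 := by nlinarith
    set μ₀ : ℝ := Real.sqrt (-c) with hμ₀def
    have hμ0 : 0 < μ₀ := Real.sqrt_pos.mpr (by linarith)
    have hμsq : μ₀ ^ 2 = -c := Real.sq_sqrt (by linarith)
    set x₀ : V := Real.sqrt (μ₀ / A v v) • (v : V) with hx₀def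
    have hx₀U : x₀ ∈ U := Submodule.smul_mem _ _ hvU
    have hAx₀ : A x₀ x₀ = μ₀ := by
      have hr : Real.sqrt (μ₀ / A v v) * Real.sqrt (μ₀ / A v v) = μ₀ / A v v :=
        Real.mul_self_sqrt (by positivity)
      have : A x₀ x₀ = Real.sqrt (μ₀ / A v v) * Real.sqrt (μ₀ / A v v) * A v v := by
        simp [hx₀def, map_smul, smul_eq_mul]; ring
      rw [this, hr]
      field_simp
    have hFFx₀ : F (F x₀) = c • x₀ := by
      simp only [hx₀def, map_smul, hFFv, smul_smul]
      rw [mul_comm]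
    set y₀ : V := μ₀⁻¹ • F x₀ with hy₀def
    have hy₀U : y₀ ∈ U := Submodule.smul_mem _ _ (hFU _ hx₀U)
    have hFx₀ : F x₀ = μ₀ • y₀ := by
      rw [hy₀def, smul_smul, mul_inv_cancel₀ (ne_of_gt hμ0), one_smul]
    have hFy₀ : F y₀ = (-μ₀) • x₀ := by
      have h1 : μ₀⁻¹ * c = -μ₀ := by
        have hcval : c = -(μ₀ ^ 2) := by linarith
        rw [hcval]
        field_simp
      rw [hy₀def, map_smul, hFFx₀, smul_smul, h1]
    have hω1 : ω x₀ y₀ = 1 := by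
      rw [hy₀def, map_smul, smul_eq_mul, ← hF x₀ x₀, hAx₀, inv_mul_cancel₀ (ne_of_gt hμ0)]
    have hωyx : ω y₀ x₀ = -1 := by rw [hanti, hω1]
    have hAx₀y₀ : A x₀ y₀ = 0 := by
      rw [hF, hFy₀, map_smul, smul_eq_mul, hself]
      ring
    have hAy₀y₀ : A y₀ y₀ = μ₀ := by
      rw [hF, hFy₀, map_smul, smul_eq_mul, hωyx]
      ring
    clear hFFx₀ hFFv hTv hTcoe hTsym hBapp hBsymm hBdef hcA hμsq hx₀def hy₀def hvne hvV hAvv hFvU hFv0 hAFv hc hμ₀def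
    clear_value y₀ x₀ μ₀ T B G
    clear hT hB hG hvU v c T B G
    set U' : Submodule ℝ V := U ⊓ LinearMap.ker (ω x₀) ⊓ LinearMap.ker (ω y₀) with hU'
    have hfr : 2 + finrank ℝ U' = N := by
      rw [hU', finrank_step ω hanti U x₀ y₀ hx₀U hy₀U hω1]; exact hrank
    have hU'le : ∀ z ∈ U', z ∈ U ∧ ω x₀ z = 0 ∧ ω y₀ z = 0 := by
      intro z hz
      rw [hU'] at hz
      obtain ⟨⟨h1, h2⟩, h3⟩ := hz
      exact ⟨h1, h2, h3⟩
    -- A-orthogonality of x₀, y₀ against U'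
    have hAx₀w : ∀ w ∈ U', A x₀ w = 0 := by
      intro w hw
      obtain ⟨hwU, hwx, hwy⟩ := hU'le w hw
      rw [hA_symm, hF, hFx₀, map_smul, smul_eq_mul, hanti w y₀, hwy]
      ring
    have hAy₀w : ∀ w ∈ U', A y₀ w = 0 := by
      intro w hw
      obtain ⟨hwU, hwx, hwy⟩ := hU'le w hw
      rw [hA_symm, hF, hFy₀, map_smul, smul_eq_mul, hanti w x₀, hwx]
      ring
    -- F preserves U'
    have hFU' : ∀ w ∈ U', F w ∈ U' := by
      intro w hw
      obtain ⟨hwU, hwx, hwy⟩ := hU'le w hw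
      have h1 : F w ∈ U := hFU _ hwU
      have h2 : ω x₀ (F w) = 0 := by rw [← hF]; exact hAx₀w w hw
      have h3 : ω y₀ (F w) = 0 := by rw [← hF]; exact hAy₀w w hw
      rw [hU']
      exact Submodule.mem_inf.mpr ⟨Submodule.mem_inf.mpr ⟨h1, LinearMap.mem_ker.mpr h2⟩,
        LinearMap.mem_ker.mpr h3⟩
    -- nondegeneracy on U'
    have hnd' : ∀ v ∈ U', (∀ w ∈ U', ω v w = 0) → v = 0 := by
      intro z hz hzw
      obtain ⟨hzU, hzx, hzy⟩ := hU'le z hz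
      apply hnd z hzU
      intro u hu
      set u' : V := u + (ω y₀ u) • x₀ - (ω x₀ u) • y₀ with hu'def
      have hu'U' : u' ∈ U' := by
        have h1 : u' ∈ U := Submodule.sub_mem _
          (Submodule.add_mem _ hu (Submodule.smul_mem _ _ hx₀U))
          (Submodule.smul_mem _ _ hy₀U)
        have h2 : ω x₀ u' = 0 := by
          simp only [hu'def, map_add, map_sub, map_smul, smul_eq_mul, hself, hω1]; ring
        have h3 : ω y₀ u' = 0 := by
          simp only [hu'def, map_add, map_sub, map_smul, smul_eq_mul, hself, hωyx]; ring
        rw [hU']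
        exact Submodule.mem_inf.mpr ⟨Submodule.mem_inf.mpr ⟨h1, LinearMap.mem_ker.mpr h2⟩,
          LinearMap.mem_ker.mpr h3⟩
      have hzx' : ω z x₀ = 0 := by rw [hanti, hzx]; ring
      have hzy' : ω z y₀ = 0 := by rw [hanti, hzy]; ring
      have := hzw u' hu'U'
      rw [hu'def] at this
      simp only [map_add, map_sub, map_smul, smul_eq_mul, hzx', hzy'] at this
      linarith [this]
    have hposU' : ∀ z ∈ U', z ≠ 0 → 0 < A z z := fun z hz => hpos z (hU'le z hz).1
    obtain ⟨m', x', y', μ', hm', hx'U, hy'U, hμ'pos, hxy', hxx', hyy', hAxx', hAyy', hAxy'⟩ :=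
      ih (finrank ℝ U') (by omega) U' rfl hnd' hFU' hposU'
    refine ⟨m' + 1, Fin.cons x₀ x', Fin.cons y₀ y', Fin.cons μ₀ μ', by omega,
      ?_, ?_, ?_, ?_, ?_, ?_, ?_, ?_, ?_⟩
    · intro i
      refine Fin.cases hx₀U (fun j => (hU'le _ (hx'U j)).1) i
    · intro i
      refine Fin.cases hy₀U (fun j => (hU'le _ (hy'U j)).1) i
    · intro i
      refine Fin.cases hμ0 (fun j => hμ'pos j) i
    · intro i j
      refine Fin.cases ?_ ?_ i <;> [skip; intro i'] <;> refine Fin.cases ?_ ?_ j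
      · simp [hω1]
      · intro j'
        have := (hU'le _ (hy'U j')).2.1
        simp [this, (Fin.succ_ne_zero j').symm]
      · have h0 : ω (x' i') y₀ = 0 := by
          rw [hanti, (hU'le _ (hx'U i')).2.2]; ring
        simp [h0, Fin.succ_ne_zero i']
      · intro j'
        have := hxy' i' j'
        simp [this, Fin.succ_inj]
    · intro i j
      refine Fin.cases ?_ ?_ i <;> [skip; intro i'] <;> refine Fin.cases ?_ ?_ j
      · simp [hself]
      · intro j'; simpa using (hU'le _ (hx'U j')).2.1
      · have : ω (x' i') x₀ = 0 := by rw [hanti, (hU'le _ (hx'U i')).2.1]; ring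
        simpa using this
      · intro j'; simpa using hxx' i' j'
    · intro i j
      refine Fin.cases ?_ ?_ i <;> [skip; intro i'] <;> refine Fin.cases ?_ ?_ j
      · simp [hself]
      · intro j'; simpa using (hU'le _ (hy'U j')).2.2
      · have : ω (y' i') y₀ = 0 := by rw [hanti, (hU'le _ (hy'U i')).2.2]; ring
        simpa using this
      · intro j'; simpa using hyy' i' j'
    · intro i j
      refine Fin.cases ?_ ?_ i <;> [skip; intro i'] <;> refine Fin.cases ?_ ?_ j
      · simp [hAx₀]
      · intro j'
        have := hAx₀w _ (hx'U j')
        simp [this, (Fin.succ_ne_zero j').symm]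
      · have : A (x' i') x₀ = 0 := by rw [hA_symm]; exact hAx₀w _ (hx'U i')
        simp [this, Fin.succ_ne_zero i']
      · intro j'
        have := hAxx' i' j'
        simp [this, Fin.succ_inj]
    · intro i j
      refine Fin.cases ?_ ?_ i <;> [skip; intro i'] <;> refine Fin.cases ?_ ?_ j
      · simp [hAy₀y₀]
      · intro j'
        have := hAy₀w _ (hy'U j')
        simp [this, (Fin.succ_ne_zero j').symm]
      · have : A (y' i') y₀ = 0 := by rw [hA_symm]; exact hAy₀w _ (hy'U i')
        simp [this, Fin.succ_ne_zero i']
      · intro j'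
        have := hAyy' i' j'
        simp [this, Fin.succ_inj]
    · intro i j
      refine Fin.cases ?_ ?_ i <;> [skip; intro i'] <;> refine Fin.cases ?_ ?_ j
      · simp [hAx₀y₀]
      · intro j'; simpa using hAx₀w _ (hy'U j')
      · have : A (x' i') y₀ = 0 := by rw [hA_symm]; exact hAy₀w _ (hx'U i')
        simpa using this
      · intro j'; simpa using hAxy' i' j'

/-- Hörmander, semidefinite case with symplectic kernel:
If f is positive-semidefinite on a 2n-dimensional symplectic space (V, ω)
with associated map F whose kernel is a symplectic subspace, then there is a
symplectic basis, 0 ≤ k ≤ n and positive μ_1,…,μ_k with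
f(Σ s_j x_j + t_j y_j) = Σ_{j<k} μ_j (s_j² + t_j²). -/
theorem stmt10 {V : Type*} [AddCommGroup V] [Module ℝ V] [FiniteDimensional ℝ V]
    (n : ℕ) (hdim : Module.finrank ℝ V = 2 * n)
    (ω : LinearMap.BilinForm ℝ V)
    (hω_anti : ∀ v w : V, ω v w = - ω w v)
    (hω_nondeg : ∀ v : V, (∀ w : V, ω v w = 0) → v = 0)
    (f : QuadraticForm ℝ V) (hf : ∀ v : V, 0 ≤ f v)
    (A : LinearMap.BilinForm ℝ V)
    (hA_symm : ∀ v w : V, A v w = A w v)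
    (hAf : ∀ v : V, A v v = f v)
    (F : V →ₗ[ℝ] V)
    (hF : ∀ v w : V, A v w = ω v (F w))
    -- Ker(F) is a symplectic subspace: ω restricted to it is nondegenerate
    (hker_symp : ∀ v ∈ LinearMap.ker F,
      (∀ w ∈ LinearMap.ker F, ω v w = 0) → v = 0) :
    ∃ (b : Basis (Fin n ⊕ Fin n) ℝ V) (k : ℕ) (mu : Fin n → ℝ),
      k ≤ n ∧
      (∀ i j, ω (b (Sum.inl i)) (b (Sum.inr j)) = if i = j then 1 else 0) ∧
      (∀ i j, ω (b (Sum.inl i)) (b (Sum.inl j)) = 0) ∧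
      (∀ i j, ω (b (Sum.inr i)) (b (Sum.inr j)) = 0) ∧
      (∀ j : Fin n, (j : ℕ) < k → 0 < mu j) ∧
      (∀ j : Fin n, k ≤ (j : ℕ) → mu j = 0) ∧
      ∀ s t : Fin n → ℝ,
        f (∑ j, (s j • b (Sum.inl j) + t j • b (Sum.inr j)))
          = ∑ j, mu j * ((s j) ^ 2 + (t j) ^ 2) := by
    classical
  set K : Submodule ℝ V := LinearMap.ker F with hK
  set W : Submodule ℝ V := ω.orthogonal K with hW
  have hWmem : ∀ m : V, m ∈ W ↔ ∀ k ∈ K, ω k m = 0 := by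
    intro m
    rw [hW, LinearMap.BilinForm.mem_orthogonal_iff]
  have hrefl : ω.IsRefl := by
    intro x y h
    rw [hω_anti, h, neg_zero]
  have hnondeg : ω.Nondegenerate := ⟨hω_nondeg, fun y hy => hω_nondeg y (fun w => by rw [hω_anti, hy w, neg_zero])⟩
  -- K ⊓ W = ⊥
  have hKW_bot : K ⊓ W = ⊥ := by
    rw [eq_bot_iff]
    intro v hv
    rw [Submodule.mem_bot]
    obtain ⟨hvK, hvW⟩ := hv
    exact hker_symp v hvK (fun w hw => by
      rw [hω_anti, (hWmem v).1 hvW w hw, neg_zero])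
  -- finrank W
  have hfrW : Module.finrank ℝ W = 2 * n - Module.finrank ℝ K := by
    rw [hW, LinearMap.BilinForm.finrank_orthogonal hnondeg, hdim]
  have hKle : Module.finrank ℝ K ≤ 2 * n := hdim ▸ Submodule.finrank_le K
  -- K ⊔ W = ⊤
  have hsup : K ⊔ W = ⊤ := by
    apply Submodule.eq_top_of_finrank_eq
    have h1 := Submodule.finrank_sup_add_finrank_inf_eq K W
    rw [hKW_bot, finrank_bot, add_zero] at h1
    rw [h1, hfrW, hdim]
    omega
  -- nondegeneracy of ω on W
  have hW_nondeg : ∀ v ∈ W, (∀ w ∈ W, ω v w = 0) → v = 0 := by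
    intro v hv hvw
    apply hω_nondeg
    intro u
    have hu : u ∈ K ⊔ W := hsup ▸ Submodule.mem_top
    obtain ⟨k, hk, w, hw, rfl⟩ := Submodule.mem_sup.1 hu
    have h1 : ω v k = 0 := by
      rw [hω_anti, (hWmem v).1 hv k hk, neg_zero]
    rw [map_add, h1, hvw w hw, add_zero]
  -- F maps everything into W
  have hFW : ∀ v : V, F v ∈ W := by
    intro v
    rw [hWmem]
    intro k hk
    have hk0 : F k = 0 := LinearMap.mem_ker.1 hk
    rw [← hF, hA_symm, hF, hk0, map_zero]
  -- semidefinite Cauchy-Schwarz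
  have hAnn : ∀ u : V, 0 ≤ A u u := fun u => (hAf u) ▸ hf u
  have hCS : ∀ z : V, A z z = 0 → ∀ u : V, A u z = 0 := by
    intro z hz u
    by_contra hne
    have expand : ∀ t : ℝ, A (u + t • z) (u + t • z) = A u u + 2 * t * A u z := by
      intro t
      simp only [map_add, map_smul, LinearMap.add_apply, LinearMap.smul_apply,
        smul_eq_mul, hz]
      rw [hA_symm z u]
      ring
    set t : ℝ := -(A u u + 1) / (2 * A u z) with ht
    have h2 : 2 * t * A u z = -(A u u + 1) := by
      rw [ht]
      field_simp
    have h3 := hAnn (u + t • z)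
    rw [expand t, h2] at h3
    linarith
  -- f positive definite on W
  have hWpos : ∀ v ∈ W, v ≠ 0 → 0 < A v v := by
    intro v hv hvne
    rcases lt_or_eq_of_le (hAnn v) with h | h
    · exact h
    exfalso
    have hz : A v v = 0 := h.symm
    have hall := hCS v hz
    have hFv : F v = 0 := by
      apply hω_nondeg
      intro w
      rw [hω_anti]
      rw [← hF w v, hall w, neg_zero]
    have : v ∈ K ⊓ W := ⟨LinearMap.mem_ker.2 hFv, hv⟩
    rw [hKW_bot, Submodule.mem_bot] at this
    exact hvne this
  -- apply the two induction lemmas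
  obtain ⟨m₀, xK, yK, hm₀, hxKmem, hyKmem, hKxy, hKxx, hKyy⟩ :=
    lemS ω hω_anti (Module.finrank ℝ K) K rfl hker_symp
  obtain ⟨m₁, xW, yW, μW, hm₁, hxWmem, hyWmem, hμWpos, hWxy, hWxx, hWyy, hAWxx, hAWyy, hAWxy⟩ :=
    lemW ω hω_anti A hA_symm F hF (Module.finrank ℝ W) W rfl hW_nondeg
      (fun v _ => hFW v) hWpos
  have hn : n = m₁ + m₀ := by omega
  subst hn
  -- combined families
  set X : Fin (m₁ + m₀) → V := Fin.append xW xK with hX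
  set Y : Fin (m₁ + m₀) → V := Fin.append yW yK with hY
  set μ : Fin (m₁ + m₀) → ℝ := Fin.append μW (fun _ => (0 : ℝ)) with hμ
  -- index facts
  have hcn : ∀ (i : Fin m₁) (j : Fin m₀),
      (Fin.castAdd m₀ i : Fin (m₁ + m₀)) ≠ Fin.natAdd m₁ j := by
    intro i j h
    have := congrArg Fin.val h
    simp only [Fin.coe_castAdd, Fin.coe_natAdd] at this
    omega
  -- A with a kernel element is zero
  have hAK : ∀ (u : V), ∀ k ∈ K, A u k = 0 := by
    intro u k hk
    rw [hF, LinearMap.mem_ker.1 hk, map_zero]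
  have hAK' : ∀ (u : V), ∀ k ∈ K, A k u = 0 := fun u k hk => by
    rw [hA_symm]; exact hAK u k hk
  -- ω between K members and W members is zero
  have hKWo : ∀ k ∈ K, ∀ w ∈ W, ω k w = 0 := fun k hk w hw => (hWmem w).1 hw k hk
  have hWKo : ∀ w ∈ W, ∀ k ∈ K, ω w k = 0 := fun w hw k hk => by
    rw [hω_anti, hKWo k hk w hw, neg_zero]
  -- combined relations
  have hXY : ∀ i j, ω (X i) (Y j) = if i = j then 1 else 0 := by
    intro i j
    refine Fin.addCases ?_ ?_ i <;> intro i' <;> refine Fin.addCases ?_ ?_ j <;> intro j'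
    · rw [hX, hY, Fin.append_left, Fin.append_left, hWxy i' j']
      by_cases h : i' = j'
      · subst h; simp
      · rw [if_neg h, if_neg (fun hh => h (by
          have := congrArg Fin.val hh
          simp only [Fin.coe_castAdd] at this
          exact Fin.ext this))]
    · rw [hX, hY, Fin.append_left, Fin.append_right,
        hWKo _ (hxWmem i') _ (hyKmem j'), if_neg (hcn i' j')]
    · rw [hX, hY, Fin.append_right, Fin.append_left,
        hKWo _ (hxKmem i') _ (hyWmem j'), if_neg (fun hh => hcn j' i' hh.symm)]
    · rw [hX, hY, Fin.append_right, Fin.append_right, hKxy i' j']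
      by_cases h : i' = j'
      · subst h; simp
      · rw [if_neg h, if_neg (fun hh => h (by
          have := congrArg Fin.val hh
          simp only [Fin.coe_natAdd] at this
          exact Fin.ext (by omega)))]
  have hXX : ∀ i j, ω (X i) (X j) = 0 := by
    intro i j
    refine Fin.addCases ?_ ?_ i <;> intro i' <;> refine Fin.addCases ?_ ?_ j <;> intro j'
    · rw [hX, Fin.append_left, Fin.append_left]; exact hWxx i' j'
    · rw [hX, Fin.append_left, Fin.append_right]
      exact hWKo _ (hxWmem i') _ (hxKmem j')
    · rw [hX, Fin.append_right, Fin.append_left]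
      exact hKWo _ (hxKmem i') _ (hxWmem j')
    · rw [hX, Fin.append_right, Fin.append_right]; exact hKxx i' j'
  have hYY : ∀ i j, ω (Y i) (Y j) = 0 := by
    intro i j
    refine Fin.addCases ?_ ?_ i <;> intro i' <;> refine Fin.addCases ?_ ?_ j <;> intro j'
    · rw [hY, Fin.append_left, Fin.append_left]; exact hWyy i' j'
    · rw [hY, Fin.append_left, Fin.append_right]
      exact hWKo _ (hyWmem i') _ (hyKmem j')
    · rw [hY, Fin.append_right, Fin.append_left]
      exact hKWo _ (hyKmem i') _ (hyWmem j')
    · rw [hY, Fin.append_right, Fin.append_right]; exact hKyy i' j'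
  have hAXX : ∀ i j, A (X i) (X j) = if i = j then μ i else 0 := by
    intro i j
    refine Fin.addCases ?_ ?_ i <;> intro i' <;> refine Fin.addCases ?_ ?_ j <;> intro j'
    · rw [hX, hμ, Fin.append_left, Fin.append_left, Fin.append_left, hAWxx i' j']
      by_cases h : i' = j'
      · subst h; simp
      · rw [if_neg h, if_neg (fun hh => h (by
          have := congrArg Fin.val hh
          simp only [Fin.coe_castAdd] at this
          exact Fin.ext this))]
    · rw [hX, Fin.append_left, Fin.append_right,
        hAK _ _ (hxKmem j'), if_neg (hcn i' j')]
    · rw [hX, Fin.append_right, Fin.append_left,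
        hAK' _ _ (hxKmem i'), if_neg (fun hh => hcn j' i' hh.symm)]
    · rw [hX, hμ, Fin.append_right, Fin.append_right,
        hAK _ _ (hxKmem j'), Fin.append_right]
      simp
  have hAYY : ∀ i j, A (Y i) (Y j) = if i = j then μ i else 0 := by
    intro i j
    refine Fin.addCases ?_ ?_ i <;> intro i' <;> refine Fin.addCases ?_ ?_ j <;> intro j'
    · rw [hY, hμ, Fin.append_left, Fin.append_left, Fin.append_left, hAWyy i' j']
      by_cases h : i' = j'
      · subst h; simp
      · rw [if_neg h, if_neg (fun hh => h (by
          have := congrArg Fin.val hh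
          simp only [Fin.coe_castAdd] at this
          exact Fin.ext this))]
    · rw [hY, Fin.append_left, Fin.append_right,
        hAK _ _ (hyKmem j'), if_neg (hcn i' j')]
    · rw [hY, Fin.append_right, Fin.append_left,
        hAK' _ _ (hyKmem i'), if_neg (fun hh => hcn j' i' hh.symm)]
    · rw [hY, hμ, Fin.append_right, Fin.append_right,
        hAK _ _ (hyKmem j'), Fin.append_right]
      simp
  have hAXY : ∀ i j, A (X i) (Y j) = 0 := by
    intro i j
    refine Fin.addCases ?_ ?_ i <;> intro i' <;> refine Fin.addCases ?_ ?_ j <;> intro j'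
    · rw [hX, hY, Fin.append_left, Fin.append_left]; exact hAWxy i' j'
    · rw [hX, hY, Fin.append_left, Fin.append_right]; exact hAK _ _ (hyKmem j')
    · rw [hX, hY, Fin.append_right, Fin.append_left]; exact hAK' _ _ (hxKmem i')
    · rw [hX, hY, Fin.append_right, Fin.append_right]; exact hAK _ _ (hyKmem j')
  have hAYX : ∀ i j, A (Y i) (X j) = 0 := fun i j => by
    rw [hA_symm]; exact hAXY j i
  -- linear independence
  set g : Fin (m₁ + m₀) ⊕ Fin (m₁ + m₀) → V := Sum.elim X Y with hg
  have li : LinearIndependent ℝ g := by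
    rw [Fintype.linearIndependent_iff]
    intro gg hsum i
    have hexp1 : ∀ u : V, ω (∑ i, gg i • g i) u = ∑ i, gg i * ω (g i) u := by
      intro u
      rw [map_sum, LinearMap.sum_apply]
      exact Finset.sum_congr rfl fun i _ => by
        rw [map_smul, LinearMap.smul_apply, smul_eq_mul]
    have hexp2 : ∀ u : V, ω u (∑ i, gg i • g i) = ∑ i, gg i * ω u (g i) := by
      intro u
      rw [map_sum]
      exact Finset.sum_congr rfl fun i _ => by
        rw [map_smul, smul_eq_mul]
    cases i with
    | inl j =>
      have h0 : ω (∑ i, gg i • g i) (Y j) = 0 := by rw [hsum]; simp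
      rw [hexp1] at h0
      rw [Fintype.sum_sum_type] at h0
      simp only [hg, Sum.elim_inl, Sum.elim_inr] at h0
      have hA : ∀ a, gg (Sum.inl a) * ω (X a) (Y j)
          = if a = j then gg (Sum.inl a) else 0 := by
        intro a
        rw [hXY a j]
        split_ifs <;> ring
      have hB : ∀ a, gg (Sum.inr a) * ω (Y a) (Y j) = 0 := by
        intro a
        rw [hYY a j]; ring
      rw [Finset.sum_congr rfl (fun a _ => hA a),
        Finset.sum_congr rfl (fun a _ => hB a)] at h0
      simp [Finset.sum_ite_eq'] at h0
      exact h0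
    | inr j =>
      have h0 : ω (X j) (∑ i, gg i • g i) = 0 := by rw [hsum]; simp
      rw [hexp2] at h0
      rw [Fintype.sum_sum_type] at h0
      simp only [hg, Sum.elim_inl, Sum.elim_inr] at h0
      have hA : ∀ a, gg (Sum.inl a) * ω (X j) (X a) = 0 := by
        intro a
        rw [hXX j a]; ring
      have hB : ∀ a, gg (Sum.inr a) * ω (X j) (Y a)
          = if j = a then gg (Sum.inr a) else 0 := by
        intro a
        rw [hXY j a]
        split_ifs <;> ring
      rw [Finset.sum_congr rfl (fun a _ => hA a),
        Finset.sum_congr rfl (fun a _ => hB a)] at h0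
      simp [Finset.sum_ite_eq] at h0
      exact h0
  have hcard : Fintype.card (Fin (m₁ + m₀) ⊕ Fin (m₁ + m₀)) = Module.finrank ℝ V := by
    simp [hdim]
    omega
  set b : Basis (Fin (m₁ + m₀) ⊕ Fin (m₁ + m₀)) ℝ V :=
    Basis.mk li (li.span_eq_top_of_card_eq_finrank' hcard).ge with hb
  have hbcoe : ∀ i, b i = g i := by
    intro i
    rw [hb, Basis.coe_mk]
  refine ⟨b, m₁, μ, by omega, ?_, ?_, ?_, ?_, ?_, ?_⟩
  · intro i j
    rw [hbcoe, hbcoe]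
    exact hXY i j
  · intro i j
    rw [hbcoe, hbcoe]
    exact hXX i j
  · intro i j
    rw [hbcoe, hbcoe]
    exact hYY i j
  · intro j hj
    have : j = Fin.castAdd m₀ ⟨j.1, hj⟩ := Fin.ext rfl
    rw [this, hμ, Fin.append_left]
    exact hμWpos _
  · intro j hj
    have : j = Fin.natAdd m₁ ⟨j.1 - m₁, by omega⟩ := Fin.ext (by
      simp only [Fin.coe_natAdd]
      omega)
    rw [this, hμ, Fin.append_right]
  · intro s t
    simp only [hbcoe, hg, Sum.elim_inl, Sum.elim_inr]
    rw [← hAf]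
    set w : Fin (m₁ + m₀) → V := fun j => s j • X j + t j • Y j with hw
    have e1 : A (∑ j, w j) = ∑ j, A (w j) := map_sum A w Finset.univ
    have step1 : A (∑ j, w j) (∑ j, w j) = ∑ j, ∑ i, A (w j) (w i) := by
      rw [e1, LinearMap.sum_apply]
      exact Finset.sum_congr rfl fun j _ => map_sum (A (w j)) w Finset.univ
    rw [step1]
    refine Finset.sum_congr rfl fun j _ => ?_
    have step2 : ∀ i, A (w j) (w i)
        = if j = i then μ i * (s i * s j + t i * t j) else 0 := by
      intro i
      simp only [hw, map_add, map_smul, LinearMap.add_apply, LinearMap.smul_apply, smul_eq_mul]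
      rw [hAXX j i, hAYY j i, hAXY j i, hAYX j i]
      split_ifs with h
      · subst h; ring
      · ring
    rw [Finset.sum_congr rfl fun i _ => step2 i,
      Finset.sum_ite_eq Finset.univ j (fun i => μ i * (s i * s j + t i * t j)),
      if_pos (Finset.mem_univ j)]
    ring
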